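/- In the bugs model with broadcast control, if all distances d_i > 0 then ∑_{i=1}^n ḋ_i ≤ −1/(2n) + n‖U_c‖. In particular, if ‖U_c‖ < 1/(2n²), then ∑_{i=1}^n ḋ_i < 0. -/

import Mathlib

/-- Bugs model with broadcast control: if all distances are positive then
`∑ ḋ_i ≤ −1/(2n) + n‖U_c‖`; in particular `∑ ḋ_i < 0` whenever `‖U_c‖ < 1/(2n²)`. -/
theorem bugs_sum_distance_derivative_with_control (n : ℕ) [NeZero n]
    (p pdot u : Fin n → EuclideanSpace ℝ (Fin 2))
    (Uc : EuclideanSpace ℝ (Fin 2))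
    (b : Fin n → ℝ) (hb : ∀ i, b i = 0 ∨ b i = 1)
    (d : Fin n → ℝ) (hd : ∀ i, d i = ‖p (i + 1) - p i‖)
    (hdpos : ∀ i, 0 < d i)
    (hu : ∀ i, u i = (d i)⁻¹ • (p (i + 1) - p i))
    (hpdot : ∀ i, pdot i = u i + b i • Uc)
    (ddot : Fin n → ℝ)
    (hddot : ∀ i, ddot i = (inner ℝ (u i) (pdot (i + 1) - pdot i) : ℝ)) :
    (∑ i : Fin n, ddot i ≤ -1 / (2 * n) + n * ‖Uc‖) ∧
    (‖Uc‖ < 1 / (2 * n ^ 2) → ∑ i : Fin n, ddot i < 0) := by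
  have hn : 0 < n := Nat.pos_of_ne_zero (NeZero.ne n)
  have hnR : (0:ℝ) < n := by exact_mod_cast hn
  -- unit vectors
  have hnorm : ∀ i, ‖u i‖ = 1 := by
    intro i
    rw [hu i, norm_smul, norm_inv, Real.norm_eq_abs, abs_of_pos (hdpos i), ← hd i,
      inv_mul_cancel₀ (hdpos i).ne']
  -- the weighted sum of unit vectors vanishes
  have hsum0 : ∑ i : Fin n, (d i) • u i = 0 := by
    have : ∀ i : Fin n, (d i) • u i = p (i + 1) - p i := by
      intro i
      rw [hu i, smul_smul, mul_inv_cancel₀ (hdpos i).ne', one_smul]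
    simp only [this]
    rw [Finset.sum_sub_distrib]
    rw [show (∑ i : Fin n, p (i + 1)) = ∑ i : Fin n, p i from
      Fintype.sum_equiv (Equiv.addRight 1) _ _ (fun i => rfl)]
    simp
  set g : Fin n → ℝ := fun i => ‖u (i + 1) - u i‖ with hg
  -- there is a vector with nonpositive inner product with u 0
  obtain ⟨j, hj⟩ : ∃ j : Fin n, (inner ℝ (u j) (u 0) : ℝ) ≤ 0 := by
    by_contra h
    push_neg at h
    have h0 : (inner ℝ (∑ i : Fin n, (d i) • u i) (u 0) : ℝ) = 0 := by rw [hsum0]; simp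
    rw [sum_inner] at h0
    have hpos : (0:ℝ) < ∑ i : Fin n, (inner ℝ ((d i) • u i) (u 0) : ℝ) := by
      apply Finset.sum_pos
      · intro i _
        rw [real_inner_smul_left]
        exact mul_pos (hdpos i) (h i)
      · exact Finset.univ_nonempty
    linarith
  have hj1 : (1:ℝ) ≤ ‖u j - u 0‖ := by
    have h2 := norm_sub_sq_real (u j) (u 0)
    rw [hnorm j, hnorm 0] at h2
    nlinarith [norm_nonneg (u j - u 0)]
  -- telescoping bound: ‖u j - u 0‖ ≤ ∑ g
  have hkey : (1:ℝ) ≤ ∑ i : Fin n, g i := by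
    set v : ℕ → EuclideanSpace ℝ (Fin 2) := fun k => u (Fin.ofNat n k) with hv
    have hvd : ∀ k : ℕ, v (k + 1) - v k = u ((Fin.ofNat n k) + 1) - u (Fin.ofNat n k) := by
      intro k; simp only [hv]; congr 2; ext; simp [Fin.val_add, Nat.add_mod]
    have htel : u j - u 0 = ∑ k ∈ Finset.range j.val, (v (k + 1) - v k) := by
      rw [Finset.sum_range_sub v]
      simp [hv]
    have h1 : ‖u j - u 0‖ ≤ ∑ k ∈ Finset.range j.val, ‖v (k + 1) - v k‖ := by
      rw [htel]; exact norm_sum_le _ _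
    have h2 : ∑ k ∈ Finset.range j.val, ‖v (k + 1) - v k‖ ≤
        ∑ k ∈ Finset.range n, ‖v (k + 1) - v k‖ := by
      apply Finset.sum_le_sum_of_subset_of_nonneg
      · exact Finset.range_subset_range.2 j.isLt.le
      · intro k _ _; exact norm_nonneg _
    have h3 : ∑ k ∈ Finset.range n, ‖v (k + 1) - v k‖ = ∑ i : Fin n, g i := by
      rw [← Fin.sum_univ_eq_sum_range (fun k => ‖v (k + 1) - v k‖) n]
      apply Finset.sum_congr rfl
      intro i _
      rw [hvd i.val]
      simp [hg, hv]
    linarith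
  have hgnn : ∀ i ∈ Finset.univ, 0 ≤ g i := fun i _ => norm_nonneg _
  have hCS : (∑ i : Fin n, g i) ^ 2 ≤ (n:ℝ) * ∑ i : Fin n, g i ^ 2 := by
    have := sq_sum_le_card_mul_sum_sq (s := Finset.univ) (f := g)
    simpa using this
  have hsumsq : (1:ℝ) / n ≤ ∑ i : Fin n, g i ^ 2 := by
    rw [div_le_iff₀ hnR]
    nlinarith [Finset.sum_nonneg hgnn]
  -- pointwise bound on ddot
  have hbound : ∀ i : Fin n, ddot i ≤ -(1/2) * g i ^ 2 + ‖Uc‖ := by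
    intro i
    have hdd : ddot i = (inner ℝ (u i) (u (i+1) - u i) : ℝ)
        + (b (i+1) - b i) * (inner ℝ (u i) Uc : ℝ) := by
      rw [hddot i, hpdot, hpdot]
      have : u (i+1) + b (i+1) • Uc - (u i + b i • Uc)
          = (u (i+1) - u i) + (b (i+1) - b i) • Uc := by
        module
      rw [this, inner_add_right, real_inner_smul_right]
    have h1 : (inner ℝ (u i) (u (i+1) - u i) : ℝ) = -(1/2) * g i ^ 2 := by
      have he := norm_sub_sq_real (u (i+1)) (u i)
      rw [hnorm (i+1), hnorm i] at he
      rw [inner_sub_right, real_inner_self_eq_norm_sq, hnorm i,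
        real_inner_comm]
      simp only [hg]
      nlinarith
    have h2 : (b (i+1) - b i) * (inner ℝ (u i) Uc : ℝ) ≤ ‖Uc‖ := by
      have habs : |b (i+1) - b i| ≤ 1 := by
        rcases hb (i+1) with h | h <;> rcases hb i with h' | h' <;>
          rw [h, h'] <;> norm_num
      have hin : |(inner ℝ (u i) Uc : ℝ)| ≤ ‖Uc‖ := by
        have := abs_real_inner_le_norm (u i) Uc
        rwa [hnorm i, one_mul] at this
      calc (b (i+1) - b i) * (inner ℝ (u i) Uc : ℝ)
          ≤ |(b (i+1) - b i) * (inner ℝ (u i) Uc : ℝ)| := le_abs_self _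
        _ = |b (i+1) - b i| * |(inner ℝ (u i) Uc : ℝ)| := abs_mul _ _
        _ ≤ 1 * ‖Uc‖ := by
            apply mul_le_mul habs hin (abs_nonneg _) zero_le_one
        _ = ‖Uc‖ := one_mul _
    rw [hdd, h1]
    linarith
  have hmain : ∑ i : Fin n, ddot i ≤ -1 / (2 * n) + n * ‖Uc‖ := by
    calc ∑ i : Fin n, ddot i ≤ ∑ i : Fin n, (-(1/2) * g i ^ 2 + ‖Uc‖) :=
          Finset.sum_le_sum (fun i _ => hbound i)
      _ = -(1/2) * ∑ i : Fin n, g i ^ 2 + n * ‖Uc‖ := by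
          rw [Finset.sum_add_distrib, ← Finset.mul_sum]
          simp [mul_comm]
      _ ≤ -(1/2) * (1/n) + n * ‖Uc‖ := by nlinarith
      _ = -1 / (2 * n) + n * ‖Uc‖ := by ring
  refine ⟨hmain, fun hUc => ?_⟩
  have : (n:ℝ) * ‖Uc‖ < n * (1 / (2 * n ^ 2)) :=
    mul_lt_mul_of_pos_left hUc hnR
  have heq : (n:ℝ) * (1 / (2 * n ^ 2)) = 1 / (2 * n) := by
    field_simp
  rw [heq] at this
  have hneg : -1 / (2 * (n:ℝ)) = -(1 / (2 * n)) := by ring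
  linarith
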